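/- There is a positive continuous function κ on (0,1) with the following property. Let T^(N) be the depth-N truncation of a rooted tree with interaction strengths J_w > 0 and inverse temperature β > 0, fix a vertex v with |v| < N, set θ = θ_v = tanh(β J_v), and let f_θ(x) = log[(cosh(x/2) + θ sinh(x/2)) / (cosh(x/2) − θ sinh(x/2))]. Then, with X_v^(N) the boundary log-likelihood ratio at v and Q_v^{N+} the conditional boundary law given η(v) = +1, one has ∫ f_θ(X_v^(N)) dQ_v^{N+} ≤ θ · m / (1 + κ(θ) m), where m = ∫ X_v^(N) dQ_v^{N+}. -/

import Mathlib

open scoped ENNReal Classical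

noncomputable section

/-- Vertices of the canonical rooted tree: finite sequences of naturals; the root is `[]`. -/
abbrev Vtx := List ℕ

/-- Vertices of the tree determined by the child-count function `c`. -/
inductive IsVtx (c : Vtx → ℕ) : Vtx → Prop
  | root : IsVtx c []
  | child {v : Vtx} {i : ℕ} : IsVtx c v → i < c v → IsVtx c (v ++ [i])

/-- A flow: conservation at every non-root, non-leaf vertex (edges are identified with their
lower endpoints). -/
def IsFlow (c : Vtx → ℕ) (μ : Vtx → ℝ≥0∞) : Prop :=
  ∀ v : Vtx, IsVtx c v → v ≠ [] → c v ≠ 0 →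
    μ v = ∑ i ∈ Finset.range (c v), μ (v ++ [i])

/-- Total flow out of the root. -/
def flowMass (c : Vtx → ℕ) (μ : Vtx → ℝ≥0∞) : ℝ≥0∞ :=
  ∑ i ∈ Finset.range (c []), μ [i]

/-- An infinite ray from the root. -/
def IsRay (c : Vtx → ℕ) (y : ℕ → ℕ) : Prop :=
  ∀ n : ℕ, y n < c ((List.range n).map y)

/-- `V_μ(y) = Σ_{e ∈ y} (μ(e) R(e))^s` along an infinite ray. -/
def rayPot (μ R : Vtx → ℝ≥0∞) (s : ℝ) (y : ℕ → ℕ) : ℝ≥0∞ :=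
  ∑' n : ℕ, (μ ((List.range (n + 1)).map y) * R ((List.range (n + 1)).map y)) ^ s

/-- `V_μ` along the maximal path from the root to a leaf `ℓ`. -/
def leafPot (μ R : Vtx → ℝ≥0∞) (s : ℝ) (ℓ : Vtx) : ℝ≥0∞ :=
  ∑ k ∈ Finset.range ℓ.length, (μ (ℓ.take (k + 1)) * R (ℓ.take (k + 1))) ^ s

/-- `cap_p` of an infinite leafless tree. -/
def capInf (c : Vtx → ℕ) (R : Vtx → ℝ≥0∞) (p : ℝ) : ℝ≥0∞ :=
  sSup {m | ∃ μ : Vtx → ℝ≥0∞, IsFlow c μ ∧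
    (∀ y : ℕ → ℕ, IsRay c y → rayPot μ R (p - 1) y ≤ 1) ∧ m = flowMass c μ}

/-- `cap_p` of a finite tree. -/
def capFin (c : Vtx → ℕ) (R : Vtx → ℝ≥0∞) (p : ℝ) : ℝ≥0∞ :=
  sSup {m | ∃ μ : Vtx → ℝ≥0∞, IsFlow c μ ∧
    (∀ ℓ : Vtx, IsVtx c ℓ → c ℓ = 0 → leafPot μ R (p - 1) ℓ ≤ 1) ∧ m = flowMass c μ}

/-- The set of vertices at distance `n` from the root. -/
def lev (c : Vtx → ℕ) : ℕ → Finset Vtx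
  | 0 => {([] : Vtx)}
  | n + 1 => (lev c n).biUnion fun v => (Finset.range (c v)).image fun i => v ++ [i]

/-- The vertices of the truncated tree `T^(N)`. -/
def verts (c : Vtx → ℕ) (N : ℕ) : Finset Vtx := (Finset.range (N + 1)).biUnion (lev c)

/-- Spin configurations on `T^(N)`. -/
def Conf (c : Vtx → ℕ) (N : ℕ) := {v // v ∈ verts c N} → Bool

instance (c : Vtx → ℕ) (N : ℕ) : Fintype (Conf c N) := by unfold Conf; infer_instance

/-- The ±1 spin of a configuration at a vertex. -/
def spin (c : Vtx → ℕ) (N : ℕ) (σ : Conf c N) (w : Vtx) : ℝ :=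
  if h : w ∈ verts c N then (if σ ⟨w, h⟩ then 1 else -1) else 1

/-- The weight `W(η) = Π_{v → w} exp(β J_w η(v) η(w))` of a configuration on `T^(N)`. -/
def wt (c : Vtx → ℕ) (J : Vtx → ℝ) (β : ℝ) (N : ℕ) (σ : Conf c N) : ℝ :=
  ∏ w ∈ (Finset.range N).biUnion (fun n => lev c (n + 1)),
    Real.exp (β * J w * spin c N σ w.dropLast * spin c N σ w)

/-- `P^(N,+)(η(o) = +1)`: probability of a plus spin at the root under plus boundary
conditions at level `N`. -/
def plusProb (c : Vtx → ℕ) (J : Vtx → ℝ) (β : ℝ) (N : ℕ) : ℝ :=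
  (∑ σ : Conf c N, if (∀ x : {v // v ∈ verts c N}, x.1 ∈ lev c N → σ x = true)
      ∧ spin c N σ [] = 1 then wt c J β N σ else 0) /
  (∑ σ : Conf c N, if (∀ x : {v // v ∈ verts c N}, x.1 ∈ lev c N → σ x = true)
      then wt c J β N σ else 0)

/-- The log-likelihood ratio `log [P(η(root) = +1 | ξ) / P(η(root) = -1 | ξ)]` at the root of
the depth-`M` truncated tree with child counts `c`, interactions `J`, inverse temperature `β`
and boundary condition `ξ` imposed on the level-`M` vertices. -/
def condRatio (c : Vtx → ℕ) (J : Vtx → ℝ) (β : ℝ) (M : ℕ) (ξ : Vtx → Bool) : ℝ :=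
  Real.log
    ((∑ σ : Conf c M, if (∀ x : {v // v ∈ verts c M}, x.1 ∈ lev c M → σ x = ξ x.1)
        ∧ spin c M σ [] = 1 then wt c J β M σ else 0) /
     (∑ σ : Conf c M, if (∀ x : {v // v ∈ verts c M}, x.1 ∈ lev c M → σ x = ξ x.1)
        ∧ spin c M σ [] = -1 then wt c J β M σ else 0))

/-- The child-count function of the subtree `T(v)` rooted at `v`. -/
def subC (c : Vtx → ℕ) (v : Vtx) : Vtx → ℕ := fun w => c (v ++ w)

/-- The interaction strengths of the subtree `T(v)` rooted at `v`. -/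
def subJ (J : Vtx → ℝ) (v : Vtx) : Vtx → ℝ := fun w => J (v ++ w)

/-- The boundary configuration (on level-`M` vertices) induced by a configuration `σ`. -/
def bdOf (c : Vtx → ℕ) (M : ℕ) (σ : Conf c M) : Vtx → Bool :=
  fun w => if h : w ∈ verts c M then σ ⟨w, h⟩ else true

/-- `X_v^(N)`: the log-likelihood ratio at the root of the subtree, as a function of the
boundary of the configuration `σ`. -/
def Xof (c : Vtx → ℕ) (J : Vtx → ℝ) (β : ℝ) (M : ℕ) (σ : Conf c M) : ℝ :=
  condRatio c J β M (bdOf c M σ)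

/-- `f_θ(x) = log[(cosh(x/2) + θ sinh(x/2)) / (cosh(x/2) − θ sinh(x/2))]`. -/
def fbias (θ x : ℝ) : ℝ :=
  Real.log ((Real.cosh (x / 2) + θ * Real.sinh (x / 2)) /
    (Real.cosh (x / 2) - θ * Real.sinh (x / 2)))

/-- The mean `m = ∫ X_v^(N) dQ_v^{N+}` of the boundary log-likelihood ratio under the
conditional boundary law given a plus spin at `v` (the root of the subtree `T^(N)(v)`). -/
def meanPlus (c : Vtx → ℕ) (J : Vtx → ℝ) (β : ℝ) (M : ℕ) (g : ℝ → ℝ) : ℝ :=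
  (∑ σ : Conf c M, if spin c M σ [] = 1 then wt c J β M σ * g (Xof c J β M σ) else 0) /
  (∑ σ : Conf c M, if spin c M σ [] = 1 then wt c J β M σ else 0)

namespace PfAux

/-- `A θ = log((1+θ)/(1-θ))`. -/
def Ath (θ : ℝ) : ℝ := Real.log ((1 + θ) / (1 - θ))

def kap (θ : ℝ) : ℝ :=
  min (θ * (1 - θ ^ 2) / 48 * θ / (13 * (Ath θ) ^ 2)) (θ / (2 * Ath θ))

lemma Ath_ge (θ : ℝ) (hθ : θ ∈ Set.Ioo (0:ℝ) 1) : θ ≤ Ath θ := by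
  obtain ⟨h0, h1⟩ := hθ
  have hpos : (0:ℝ) < (1 + θ) / (1 - θ) := by
    apply div_pos <;> linarith
  rw [Ath, Real.le_log_iff_exp_le hpos]
  have h2 : Real.exp θ * (1 - θ) ≤ 1 := by
    have := Real.add_one_le_exp (-θ)
    have h3 : (1 - θ) ≤ Real.exp (-θ) := by linarith
    calc Real.exp θ * (1 - θ) ≤ Real.exp θ * Real.exp (-θ) := by
          apply mul_le_mul_of_nonneg_left h3 (Real.exp_pos θ).le
      _ = 1 := by rw [← Real.exp_add]; simp
  rw [le_div_iff₀ (by linarith)]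
  nlinarith

lemma Ath_pos (θ : ℝ) (hθ : θ ∈ Set.Ioo (0:ℝ) 1) : 0 < Ath θ :=
  lt_of_lt_of_le hθ.1 (Ath_ge θ hθ)

lemma kap_pos (θ : ℝ) (hθ : θ ∈ Set.Ioo (0:ℝ) 1) : 0 < kap θ := by
  have hA := Ath_pos θ hθ
  obtain ⟨h0, h1⟩ := hθ
  have : (0:ℝ) < 1 - θ ^ 2 := by nlinarith
  apply lt_min <;> positivity

lemma kap_continuousOn : ContinuousOn kap (Set.Ioo (0:ℝ) 1) := by
  have hA : ContinuousOn Ath (Set.Ioo (0:ℝ) 1) := by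
    apply ContinuousOn.log
    · apply ContinuousOn.div (by fun_prop) (by fun_prop)
      intro x hx
      have := hx.2; intro h; simp at *; linarith
    · intro x hx
      have h1 : (0:ℝ) < (1 + x) / (1 - x) := by
        have := hx.1; have := hx.2
        apply div_pos <;> linarith
      exact ne_of_gt h1
  have hAne : ∀ x ∈ Set.Ioo (0:ℝ) 1, Ath x ≠ 0 := fun x hx => (Ath_pos x hx).ne'
  unfold kap
  apply continuous_min.comp_continuousOn (ContinuousOn.prodMk ?_ ?_)
  · apply ContinuousOn.div (by fun_prop)
    · exact ContinuousOn.mul continuousOn_const (ContinuousOn.pow hA 2)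
    · intro x hx
      have h := Ath_pos x hx
      positivity
  · apply ContinuousOn.div (by fun_prop)
    · exact ContinuousOn.mul continuousOn_const hA
    · intro x hx
      have h := Ath_pos x hx
      positivity

lemma abs_sinh_lt_cosh (u : ℝ) : |Real.sinh u| < Real.cosh u := by
  rw [abs_lt]
  constructor
  · have h := Real.cosh_add_sinh u
    have := Real.exp_pos u
    linarith
  · exact Real.sinh_lt_cosh u

variable {θ : ℝ}

lemma num_pos (hθ : θ ∈ Set.Ioo (0:ℝ) 1) (u : ℝ) :
    0 < Real.cosh u + θ * Real.sinh u := by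
  obtain ⟨h0, h1⟩ := hθ
  have h := abs_sinh_lt_cosh u
  rw [abs_lt] at h
  rcases le_or_gt 0 (Real.sinh u) with hs | hs
  · nlinarith
  · nlinarith

lemma den_pos (hθ : θ ∈ Set.Ioo (0:ℝ) 1) (u : ℝ) :
    0 < Real.cosh u - θ * Real.sinh u := by
  obtain ⟨h0, h1⟩ := hθ
  have h := abs_sinh_lt_cosh u
  rw [abs_lt] at h
  rcases le_or_gt 0 (Real.sinh u) with hs | hs
  · nlinarith
  · nlinarith

lemma sq_den_pos (hθ : θ ∈ Set.Ioo (0:ℝ) 1) (u : ℝ) :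
    0 < Real.cosh u ^ 2 - θ^2 * Real.sinh u ^ 2 := by
  have h1 := num_pos hθ u
  have h2 := den_pos hθ u
  nlinarith

lemma hasDerivAt_fb (hθ : θ ∈ Set.Ioo (0:ℝ) 1) (x : ℝ) :
    HasDerivAt (fbias θ) (θ / (Real.cosh (x/2)^2 - θ^2 * Real.sinh (x/2)^2)) x := by
  have h2 : HasDerivAt (fun y : ℝ => y/2) (1/2) x := by
    simpa using (hasDerivAt_id x).div_const 2
  have hc : HasDerivAt (fun y : ℝ => Real.cosh (y/2)) (Real.sinh (x/2) * (1/2)) x :=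
    h2.cosh
  have hs : HasDerivAt (fun y : ℝ => Real.sinh (y/2)) (Real.cosh (x/2) * (1/2)) x :=
    h2.sinh
  have hnum : HasDerivAt (fun y : ℝ => Real.cosh (y/2) + θ * Real.sinh (y/2))
      (Real.sinh (x/2) * (1/2) + θ * (Real.cosh (x/2) * (1/2))) x :=
    hc.add (hs.const_mul θ)
  have hden : HasDerivAt (fun y : ℝ => Real.cosh (y/2) - θ * Real.sinh (y/2))
      (Real.sinh (x/2) * (1/2) - θ * (Real.cosh (x/2) * (1/2))) x :=
    hc.sub (hs.const_mul θ)
  have hfb : fbias θ = fun y : ℝ => Real.log (Real.cosh (y/2) + θ * Real.sinh (y/2))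
      - Real.log (Real.cosh (y/2) - θ * Real.sinh (y/2)) := by
    funext y
    exact Real.log_div (num_pos hθ (y/2)).ne' (den_pos hθ (y/2)).ne'
  rw [hfb]
  have hd := (hnum.log (num_pos hθ (x/2)).ne').sub (hden.log (den_pos hθ (x/2)).ne')
  refine hd.congr_deriv ?_
  symm
  have hcs := Real.cosh_sq_sub_sinh_sq (x/2)
  have e1 := (num_pos hθ (x/2)).ne'
  have e2 := (den_pos hθ (x/2)).ne'
  have e3 := (sq_den_pos hθ (x/2)).ne'
  field_simp
  linear_combination (-2*θ*(Real.cosh (x/2)^2 - θ^2*Real.sinh (x/2)^2)) * hcs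

/-- Monotonicity from derivative. -/
lemma mono_aux {g g' : ℝ → ℝ} {a b : ℝ} (hab : a ≤ b) (hd : ∀ x, HasDerivAt g (g' x) x)
    (h0 : ∀ x ∈ Set.Icc a b, 0 ≤ g' x) : g a ≤ g b := by
  have hm := monotoneOn_of_deriv_nonneg (convex_Icc a b)
    (fun x hx => (hd x).continuousAt.continuousWithinAt)
    (fun x hx => ((hd x).differentiableAt).differentiableWithinAt)
    (fun x hx => by rw [(hd x).deriv]; exact h0 x (interior_subset hx))
  exact hm (Set.left_mem_Icc.2 hab) (Set.right_mem_Icc.2 hab) hab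

def Hf (θ x : ℝ) : ℝ := θ * x - fbias θ x

lemma hasDerivAt_Hf (hθ : θ ∈ Set.Ioo (0:ℝ) 1) (x : ℝ) :
    HasDerivAt (Hf θ)
      (θ * (1 - θ^2) * Real.sinh (x/2)^2 / (Real.cosh (x/2)^2 - θ^2 * Real.sinh (x/2)^2)) x := by
  have hd := ((hasDerivAt_id x).const_mul θ).sub (hasDerivAt_fb hθ x)
  have hD := sq_den_pos hθ (x/2)
  have hcs := Real.cosh_sq_sub_sinh_sq (x/2)
  refine hd.congr_deriv ?_
  symm
  field_simp
  linear_combination (-θ) * hcs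

lemma Hf_mono (hθ : θ ∈ Set.Ioo (0:ℝ) 1) {a b : ℝ} (hab : a ≤ b) : Hf θ a ≤ Hf θ b := by
  apply mono_aux hab (hasDerivAt_Hf hθ)
  intro x _
  have hD := sq_den_pos hθ (x/2)
  have h1 : (0:ℝ) ≤ θ * (1 - θ^2) * Real.sinh (x/2)^2 := by
    have h2 := hθ.1
    have h3 : (0:ℝ) < 1 - θ^2 := by have := hθ.2; nlinarith
    positivity
  exact div_nonneg h1 hD.le

lemma fb_zero : fbias θ 0 = 0 := by
  simp [fbias]

lemma Hf_zero : Hf θ 0 = 0 := by simp [Hf, fb_zero]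

lemma fb_le_theta_mul (hθ : θ ∈ Set.Ioo (0:ℝ) 1) {x : ℝ} (hx : 0 ≤ x) : fbias θ x ≤ θ * x := by
  have := Hf_mono hθ hx
  rw [Hf_zero] at this
  simp only [Hf] at this
  linarith

lemma fb_nonneg (hθ : θ ∈ Set.Ioo (0:ℝ) 1) {x : ℝ} (hx : 0 ≤ x) : 0 ≤ fbias θ x := by
  apply Real.log_nonneg
  rw [le_div_iff₀ (den_pos hθ (x/2))]
  have hs : 0 ≤ Real.sinh (x/2) := Real.sinh_nonneg_iff.2 (by linarith)
  have := hθ.1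
  nlinarith

lemma fb_le_A (hθ : θ ∈ Set.Ioo (0:ℝ) 1) (x : ℝ) : fbias θ x ≤ Ath θ := by
  unfold fbias Ath
  have h1 : (0:ℝ) < (Real.cosh (x/2) + θ * Real.sinh (x/2)) / (Real.cosh (x/2) - θ * Real.sinh (x/2)) :=
    div_pos (num_pos hθ _) (den_pos hθ _)
  have h2 : (0:ℝ) < (1 + θ) / (1 - θ) := by
    have := hθ.1; have := hθ.2; apply div_pos <;> linarith
  rw [Real.log_le_log_iff h1 h2, div_le_div_iff₀ (den_pos hθ _) (by have := hθ.2; linarith)]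
  have hsc := Real.sinh_lt_cosh (x/2)
  have := hθ.1; have := hθ.2
  nlinarith

lemma fb_odd (hθ : θ ∈ Set.Ioo (0:ℝ) 1) (x : ℝ) : fbias θ (-x) = - fbias θ x := by
  have h : fbias θ (-x) = Real.log ((Real.cosh (x/2) - θ * Real.sinh (x/2)) /
      (Real.cosh (x/2) + θ * Real.sinh (x/2))) := by
    unfold fbias
    rw [show -x/2 = -(x/2) by ring, Real.cosh_neg, Real.sinh_neg]
    congr 1
    ring
  rw [h, Real.log_div (den_pos hθ (x/2)).ne' (num_pos hθ (x/2)).ne']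
  unfold fbias
  rw [Real.log_div (num_pos hθ (x/2)).ne' (den_pos hθ (x/2)).ne']
  ring


lemma cosh_half_le_two {y : ℝ} (h0 : 0 ≤ y) (h1 : y ≤ 1) : Real.cosh (y/2) ≤ 2 := by
  have he : Real.exp (y/2) ≤ 2 := by
    have h2 : Real.exp (y/2) ≤ Real.exp (1/2) := Real.exp_le_exp.2 (by linarith)
    have h3 : Real.exp (1/2) * Real.exp (1/2) = Real.exp 1 := by
      rw [← Real.exp_add]; norm_num
    have h4 : Real.exp 1 < 4 := by
      have := Real.exp_one_lt_d9; norm_num at this ⊢; linarith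
    nlinarith [Real.exp_pos (1/2 : ℝ)]
  have h5 : Real.exp (-(y/2)) ≤ 1 := Real.exp_le_one_iff.2 (by linarith)
  rw [Real.cosh_eq]
  linarith

lemma Hf_cubic (hθ : θ ∈ Set.Ioo (0:ℝ) 1) {x : ℝ} (h0 : 0 ≤ x) (h1 : x ≤ 1) :
    θ * (1 - θ^2) / 48 * x^3 ≤ Hf θ x := by
  have key : ∀ y : ℝ, HasDerivAt (fun z => Hf θ z - θ * (1 - θ^2) / 48 * z^3)
      (θ * (1 - θ^2) * Real.sinh (y/2)^2 / (Real.cosh (y/2)^2 - θ^2 * Real.sinh (y/2)^2)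
        - θ * (1 - θ^2) / 48 * (3 * y^2)) y := by
    intro y
    exact (hasDerivAt_Hf hθ y).sub (((hasDerivAt_pow 3 y).const_mul (θ * (1 - θ^2) / 48)).congr_deriv (by ring))
  have hmono := mono_aux h0 key ?_
  · simp only [Hf_zero] at hmono
    norm_num at hmono
    linarith
  · intro y hy
    obtain ⟨hy0, hy1⟩ := hy
    have hy1' : y ≤ 1 := le_trans hy1 h1
    have hD := sq_den_pos hθ (y/2)
    have hDle : Real.cosh (y/2)^2 - θ^2 * Real.sinh (y/2)^2 ≤ 4 := by
      have hc := cosh_half_le_two hy0 hy1'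
      have hc0 := Real.cosh_pos (y/2)
      nlinarith [sq_nonneg (θ * Real.sinh (y/2))]
    have hs : y/2 ≤ Real.sinh (y/2) := Real.self_le_sinh_iff.2 (by linarith)
    have hfac : (0:ℝ) < θ * (1 - θ^2) := by
      have := hθ.1; have := hθ.2; nlinarith
    rw [sub_nonneg, le_div_iff₀ hD]
    have hs2 : y^2/4 ≤ Real.sinh (y/2)^2 := by nlinarith
    have hposc : (0:ℝ) ≤ θ * (1 - θ^2) / 48 * (3 * y^2) := by
      have := hθ.1; have h9 : (0:ℝ) < 1 - θ^2 := by have := hθ.2; nlinarith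
      positivity
    nlinarith [mul_le_mul_of_nonneg_left hDle hposc, mul_le_mul_of_nonneg_left hs2 hfac.le]
  
lemma two_one_sub_exp_le {x : ℝ} (hx : 0 ≤ x) :
    2 * (1 - Real.exp (-x)) ≤ x * (1 + Real.exp (-x)) := by
  have key : ∀ y : ℝ, HasDerivAt (fun z => z * (1 + Real.exp (-z)) - 2 * (1 - Real.exp (-z)))
      (1 - Real.exp (-y) - y * Real.exp (-y)) y := by
    intro y
    have he : HasDerivAt (fun z : ℝ => Real.exp (-z)) (-Real.exp (-y)) y := by
      simpa using (hasDerivAt_neg y).exp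
    exact (((hasDerivAt_id y).mul ((hasDerivAt_const y 1).add he)).sub
      (((hasDerivAt_const y 1).sub he).const_mul 2)).congr_deriv (by simp; ring)
  have hmono := mono_aux hx key ?_
  · norm_num at hmono
    linarith
  · intro y hy
    have hy0 : 0 ≤ y := hy.1
    have h3 : (1 + y) * Real.exp (-y) ≤ 1 := by
      have h4 := Real.add_one_le_exp y
      have h5 : Real.exp y * Real.exp (-y) = 1 := by rw [← Real.exp_add]; simp
      nlinarith [Real.exp_pos (-y), Real.exp_pos y]
    nlinarith [Real.exp_pos (-y)]


set_option maxHeartbeats 1000000 in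
lemma BLem (hθ : θ ∈ Set.Ioo (0:ℝ) 1) {m : ℝ} (hm : 0 ≤ m) :
    ∃ lam nu : ℝ, 0 ≤ nu ∧
      (∀ x : ℝ, 0 < x → fbias θ x * (1 - Real.exp (-x)) ≤
        lam * (x * (1 - Real.exp (-x))) + nu * (1 + Real.exp (-x))) ∧
      lam * m + nu ≤ θ * m / (1 + kap θ * m) := by
  obtain ⟨hθ0, hθ1⟩ := hθ
  have hA : θ ≤ Ath θ := Ath_ge θ ⟨hθ0, hθ1⟩
  set A := Ath θ with hAdef
  have hA0 : 0 < A := lt_of_lt_of_le hθ0 hA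
  have hss : (0:ℝ) < 1 - θ^2 := by nlinarith
  set c0 : ℝ := θ * (1 - θ^2) / 48 with hc0def
  set c' : ℝ := c0 * θ^2 / (13 * A^2) with hc'def
  have hc0 : 0 < c0 := by rw [hc0def]; positivity
  have hc' : 0 < c' := by rw [hc'def]; positivity
  have hA2 : (0:ℝ) < 13 * A^2 := by positivity
  have hc'eq : c' * (13 * A^2) = c0 * θ^2 := by
    rw [hc'def]; field_simp
  have hκ : kap θ = min (c0 * θ / (13 * A^2)) (θ / (2 * A)) := by
    rw [kap, hc0def, hAdef]
  have hκpos : 0 < kap θ := kap_pos θ ⟨hθ0, hθ1⟩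
  have hκ1 : kap θ * (13 * A^2) ≤ c0 * θ := by
    have h : kap θ ≤ c0 * θ / (13 * A^2) := by
      rw [hκ]; exact min_le_left _ _
    rwa [le_div_iff₀ hA2] at h
  have hκθ : kap θ * θ ≤ c' := by
    nlinarith [mul_le_mul_of_nonneg_right hκ1 hθ0.le, hc'eq]
  have hκA : kap θ ≤ θ / (2 * A) := by
    rw [hκ]; exact min_le_right _ _
  have h12 : 12 * c0 ≤ 13 * A := by
    rw [hc0def]
    nlinarith [sq_nonneg θ, mul_pos hθ0 hss]
  have hθ2 : θ^2 ≤ A^2 := by nlinarith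
  have hc'c0 : c' ≤ c0 := by nlinarith [hc'eq, mul_le_mul_of_nonneg_left hθ2 hc0.le]
  have h10' : 12 * (c' * A^2) ≤ c0 * θ^2 := by
    nlinarith [hc'eq, mul_pos hc' (show (0:ℝ) < A^2 by positivity)]
  have h16' : 12 * c' * A ≤ θ^2 := by
    nlinarith [hc'eq, mul_le_mul_of_nonneg_right h12
      (show (0:ℝ) ≤ A * θ^2 by positivity), mul_pos hθ0 hθ0, hA0,
      mul_pos (mul_pos hθ0 hθ0) hA0]
  have hdenpos : 0 < 1 + kap θ * m := by positivity
  rcases le_or_gt (2 * A / θ) m with hcase | hcase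
  · -- large m
    refine ⟨0, A, hA0.le, fun x hx => ?_, ?_⟩
    · have he0 : 0 < Real.exp (-x) := Real.exp_pos _
      have he1 : Real.exp (-x) < 1 := by
        rw [Real.exp_lt_one_iff]; linarith
      have h1 := fb_le_A ⟨hθ0, hθ1⟩ x
      rw [← hAdef] at h1
      have h2 := fb_nonneg ⟨hθ0, hθ1⟩ hx.le
      nlinarith
    · rw [le_div_iff₀ hdenpos]
      have h3 : A * kap θ ≤ θ / 2 := by
        have h := mul_le_mul_of_nonneg_left hκA hA0.le
        have h' : A * (θ / (2 * A)) = θ / 2 := by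
          field_simp
        rw [h'] at h
        linarith
      have h4 : 2 * A ≤ θ * m := by
        rw [div_le_iff₀ hθ0] at hcase; linarith
      nlinarith [mul_le_mul_of_nonneg_right h3 hm]
  · -- small m
    have hmθ : m * θ < 2 * A := by
      rw [lt_div_iff₀ hθ0] at hcase; linarith
    refine ⟨θ - 3 * c' * m, 2 * c' * m^2, by positivity, fun x hx => ?_, ?_⟩
    · have key : fbias θ x ≤ θ * x - 3 * c' * m * x + 4 * c' * m^2 / x := by
        rcases le_or_gt x 1 with hx1 | hx1
        · have hcub := Hf_cubic ⟨hθ0, hθ1⟩ hx.le hx1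
          rw [Hf, ← hc0def] at hcub
          have h5 : 3 * c' * m * x - c' * x^3 ≤ 4 * c' * m^2 / x := by
            rw [sub_le_iff_le_add, ← sub_le_iff_le_add, le_div_iff₀ hx]
            nlinarith [sq_nonneg (x^2 - 3/2 * m), hc'.le, mul_pos hc' hx]
          have h6 : c' * x^3 ≤ c0 * x^3 := by nlinarith [pow_pos hx 3]
          linarith
        · have hHf : 3 * c' * m * x ≤ θ * x - fbias θ x := by
            rcases le_or_gt x (2 * A / θ) with hx2 | hx2
            · have hxθ : x * θ ≤ 2 * A := by
                rw [le_div_iff₀ hθ0] at hx2; linarith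
              have h7 : Hf θ 1 ≤ Hf θ x := Hf_mono ⟨hθ0, hθ1⟩ hx1.le
              have h8 := Hf_cubic ⟨hθ0, hθ1⟩ zero_le_one le_rfl
              rw [← hc0def] at h8
              norm_num at h8
              have hprod : (m * θ) * (x * θ) ≤ 2 * A * (2 * A) :=
                mul_le_mul hmθ.le hxθ (by positivity) (by positivity)
              have h9 : 3 * c' * m * x ≤ c0 := by
                nlinarith [mul_le_mul_of_nonneg_left hprod (show (0:ℝ) ≤ 3 * c' by positivity),
                  h10', mul_pos hθ0 hθ0]
              have h20 : Hf θ x = θ * x - fbias θ x := rfl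
              linarith
            · have h11 : A ≤ θ * x / 2 := by
                rw [div_lt_iff₀ hθ0] at hx2
                linarith
              have h13 := fb_le_A ⟨hθ0, hθ1⟩ x
              rw [← hAdef] at h13
              have h15 : 3 * c' * m ≤ θ / 2 := by
                nlinarith [h16', mul_le_mul_of_nonneg_left hmθ.le
                  (show (0:ℝ) ≤ 6 * c' by positivity), hθ0]
              have h14 := mul_le_mul_of_nonneg_right h15 hx.le
              linarith
          have h21 : 0 ≤ 4 * c' * m^2 / x := by positivity
          linarith
      have he : 0 ≤ 1 - Real.exp (-x) := by
        have : Real.exp (-x) ≤ 1 := by rw [Real.exp_le_one_iff]; linarith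
        linarith
      have h17 := mul_le_mul_of_nonneg_right key he
      have h18 : 4*c'*m^2/x * (1 - Real.exp (-x)) ≤ 2*c'*m^2 * (1 + Real.exp (-x)) := by
        rw [div_mul_eq_mul_div, div_le_iff₀ hx]
        nlinarith [mul_le_mul_of_nonneg_left (two_one_sub_exp_le hx.le)
          (show (0:ℝ) ≤ 2*c'*m^2 by positivity)]
      calc fbias θ x * (1 - Real.exp (-x))
          ≤ (θ * x - 3 * c' * m * x + 4 * c' * m^2 / x) * (1 - Real.exp (-x)) := h17
        _ = (θ - 3*c'*m) * (x * (1 - Real.exp (-x))) + 4*c'*m^2/x * (1 - Real.exp (-x)) := by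
            ring
        _ ≤ (θ - 3*c'*m) * (x * (1 - Real.exp (-x))) + 2*c'*m^2 * (1 + Real.exp (-x)) := by
            linarith
    · rw [le_div_iff₀ hdenpos]
      nlinarith [mul_le_mul_of_nonneg_right hκθ (sq_nonneg m),
        mul_nonneg (mul_nonneg hc'.le hκpos.le) (pow_nonneg hm 3),
        mul_nonneg hκpos.le hm]

end PfAux


namespace PfC

lemma lev_length {c : Vtx → ℕ} {n : ℕ} {w : Vtx} (h : w ∈ lev c n) : w.length = n := by
  induction n generalizing w with
  | zero => simp [lev] at h; simp [h]
  | succ n ih =>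
    simp only [lev, Finset.mem_biUnion, Finset.mem_image, Finset.mem_range] at h
    obtain ⟨v, hv, i, hi, rfl⟩ := h
    simp [ih hv]

lemma dropLast_mem_lev {c : Vtx → ℕ} {n : ℕ} {w : Vtx} (h : w ∈ lev c (n+1)) :
    w.dropLast ∈ lev c n := by
  simp only [lev, Finset.mem_biUnion, Finset.mem_image, Finset.mem_range] at h
  obtain ⟨v, hv, i, hi, rfl⟩ := h
  simpa using hv

lemma lev_subset_verts {c : Vtx → ℕ} {n N : ℕ} (h : n ≤ N) : lev c n ⊆ verts c N := by
  intro w hw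
  exact Finset.mem_biUnion.2 ⟨n, Finset.mem_range.2 (Nat.lt_succ_of_le h), hw⟩

lemma root_mem_verts (c : Vtx → ℕ) (N : ℕ) : ([] : Vtx) ∈ verts c N :=
  lev_subset_verts (Nat.zero_le N) (by simp [lev])

lemma root_not_mem_lev {c : Vtx → ℕ} {M : ℕ} (hM : 0 < M) : ([] : Vtx) ∉ lev c M := by
  intro h
  have := lev_length h
  simp at this
  omega

variable (c : Vtx → ℕ) (J : Vtx → ℝ) (β : ℝ) (M : ℕ)

lemma wt_pos (σ : Conf c M) : 0 < wt c J β M σ :=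
  Finset.prod_pos fun w _ => Real.exp_pos _

/-- global spin flip -/
def negC (σ : Conf c M) : Conf c M := fun x => !(σ x)

lemma spin_negC (σ : Conf c M) {w : Vtx} (h : w ∈ verts c M) :
    spin c M (negC c M σ) w = - spin c M σ w := by
  unfold spin negC
  rw [dif_pos h, dif_pos h]
  cases σ ⟨w, h⟩ <;> simp

lemma wt_negC (σ : Conf c M) : wt c J β M (negC c M σ) = wt c J β M σ := by
  unfold wt
  apply Finset.prod_congr rfl
  intro w hw
  simp only [Finset.mem_biUnion, Finset.mem_range] at hw
  obtain ⟨n, hn, hwn⟩ := hw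
  have hw1 : w ∈ verts c M := lev_subset_verts hn hwn
  have hw2 : w.dropLast ∈ verts c M :=
    lev_subset_verts (le_of_lt hn) (dropLast_mem_lev hwn)
  rw [spin_negC c M σ hw1, spin_negC c M σ hw2]
  ring_nf

lemma spin_root_cases (σ : Conf c M) :
    spin c M σ [] = 1 ∨ spin c M σ [] = -1 := by
  unfold spin
  rw [dif_pos (root_mem_verts c M)]
  cases σ ⟨[], root_mem_verts c M⟩ <;> simp

/-- sum defining the plus-conditioned numerator -/
def Np (ξ : Vtx → Bool) : ℝ :=
  ∑ σ : Conf c M, if (∀ x : {v // v ∈ verts c M}, x.1 ∈ lev c M → σ x = ξ x.1)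
      ∧ spin c M σ [] = 1 then wt c J β M σ else 0

def Nm (ξ : Vtx → Bool) : ℝ :=
  ∑ σ : Conf c M, if (∀ x : {v // v ∈ verts c M}, x.1 ∈ lev c M → σ x = ξ x.1)
      ∧ spin c M σ [] = -1 then wt c J β M σ else 0

lemma condRatio_eq (ξ : Vtx → Bool) :
    condRatio c J β M ξ = Real.log (Np c J β M ξ / Nm c J β M ξ) := rfl

lemma Np_pos (hM : 0 < M) (ξ : Vtx → Bool) : 0 < Np c J β M ξ := by
  apply Finset.sum_pos'
  · intro σ _
    split
    · exact (wt_pos c J β M σ).le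
    · exact le_refl 0
  · refine ⟨fun x => if x.1 ∈ lev c M then ξ x.1 else true, Finset.mem_univ _, ?_⟩
    rw [if_pos]
    · exact wt_pos c J β M _
    constructor
    · intro x hx; simp [hx]
    · unfold spin
      rw [dif_pos (root_mem_verts c M)]
      simp [root_not_mem_lev hM]

lemma Nm_pos (hM : 0 < M) (ξ : Vtx → Bool) : 0 < Nm c J β M ξ := by
  apply Finset.sum_pos'
  · intro σ _
    split
    · exact (wt_pos c J β M σ).le
    · exact le_refl 0
  · refine ⟨fun x => if x.1 ∈ lev c M then ξ x.1 else false, Finset.mem_univ _, ?_⟩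
    rw [if_pos]
    · exact wt_pos c J β M _
    constructor
    · intro x hx; simp [hx]
    · unfold spin
      rw [dif_pos (root_mem_verts c M)]
      simp [root_not_mem_lev hM]

variable {c J β M}

lemma negC_bijective : Function.Bijective (negC c M) :=
  Function.Involutive.bijective (fun σ => by funext x; simp [negC])

variable (c J β M)

lemma Nm_eq_Np_flip (ξ : Vtx → Bool) :
    Nm c J β M ξ = Np c J β M (fun w => !(ξ w)) := by
  unfold Nm Np
  apply Fintype.sum_bijective (negC c M) negC_bijective
  intro σ
  rw [wt_negC]
  apply if_congr _ rfl rfl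
  constructor
  · rintro ⟨h1, h2⟩
    refine ⟨fun x hx => by simp [negC, h1 x hx], ?_⟩
    rw [spin_negC c M σ (root_mem_verts c M), h2]
    norm_num
  · rintro ⟨h1, h2⟩
    rw [spin_negC c M σ (root_mem_verts c M)] at h2
    refine ⟨fun x hx => ?_, by linarith⟩
    have := h1 x hx
    simp [negC] at this
    simp [this]

lemma Np_congr {ξ ξ' : Vtx → Bool} (h : ∀ w ∈ lev c M, ξ w = ξ' w) :
    Np c J β M ξ = Np c J β M ξ' := by
  unfold Np
  apply Finset.sum_congr rfl
  intro σ _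
  apply if_congr _ rfl rfl
  have : ∀ x : {v // v ∈ verts c M}, x.1 ∈ lev c M → ξ x.1 = ξ' x.1 :=
    fun x hx => h x.1 hx
  constructor
  · rintro ⟨h1, h2⟩
    exact ⟨fun x hx => (h1 x hx).trans (this x hx), h2⟩
  · rintro ⟨h1, h2⟩
    exact ⟨fun x hx => (h1 x hx).trans (this x hx).symm, h2⟩

lemma Nm_congr {ξ ξ' : Vtx → Bool} (h : ∀ w ∈ lev c M, ξ w = ξ' w) :
    Nm c J β M ξ = Nm c J β M ξ' := by
  unfold Nm
  apply Finset.sum_congr rfl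
  intro σ _
  apply if_congr _ rfl rfl
  have : ∀ x : {v // v ∈ verts c M}, x.1 ∈ lev c M → ξ x.1 = ξ' x.1 :=
    fun x hx => h x.1 hx
  constructor
  · rintro ⟨h1, h2⟩
    exact ⟨fun x hx => (h1 x hx).trans (this x hx), h2⟩
  · rintro ⟨h1, h2⟩
    exact ⟨fun x hx => (h1 x hx).trans (this x hx).symm, h2⟩

lemma condRatio_congr {ξ ξ' : Vtx → Bool} (h : ∀ w ∈ lev c M, ξ w = ξ' w) :
    condRatio c J β M ξ = condRatio c J β M ξ' := by
  rw [condRatio_eq, condRatio_eq, Np_congr c J β M h, Nm_congr c J β M h]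

lemma condRatio_neg (hM : 0 < M) (ξ : Vtx → Bool) :
    condRatio c J β M (fun w => !(ξ w)) = - condRatio c J β M ξ := by
  have hNp := Np_pos c J β M hM ξ
  have hNm := Nm_pos c J β M hM ξ
  have h1 : Np c J β M (fun w => !(ξ w)) = Nm c J β M ξ :=
    (Nm_eq_Np_flip c J β M ξ).symm
  have h2 : Nm c J β M (fun w => !(ξ w)) = Np c J β M ξ := by
    rw [Nm_eq_Np_flip c J β M]
    apply Np_congr
    intro w _
    simp
  rw [condRatio_eq, condRatio_eq, h1, h2,
    Real.log_div hNm.ne' hNp.ne', Real.log_div hNp.ne' hNm.ne']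
  ring

lemma Xof_negC (hM : 0 < M) (σ : Conf c M) :
    Xof c J β M (negC c M σ) = - Xof c J β M σ := by
  unfold Xof
  have h1 : condRatio c J β M (bdOf c M (negC c M σ))
      = condRatio c J β M (fun w => !(bdOf c M σ w)) := by
    apply condRatio_congr
    intro w hw
    have hv : w ∈ verts c M := lev_subset_verts le_rfl hw
    unfold bdOf negC
    rw [dif_pos hv, dif_pos hv]
  rw [h1, condRatio_neg c J β M hM]

/-- boundary trace map -/
def bmap (σ : Conf c M) : Vtx → Bool :=
  fun w => if w ∈ lev c M then bdOf c M σ w else true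

lemma Xof_eq_bmap (σ : Conf c M) :
    Xof c J β M σ = condRatio c J β M (bmap c M σ) := by
  apply condRatio_congr
  intro w hw
  simp [bmap, hw]

lemma agree_iff {σ τ : Conf c M} :
    (∀ x : {v // v ∈ verts c M}, x.1 ∈ lev c M → σ x = bmap c M τ x.1)
      ↔ bmap c M σ = bmap c M τ := by
  constructor
  · intro h
    funext w
    by_cases hw : w ∈ lev c M
    · have hv : w ∈ verts c M := lev_subset_verts le_rfl hw
      have := h ⟨w, hv⟩ hw
      simp only [bmap, if_pos hw] at this ⊢
      rw [← this]
      unfold bdOf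
      rw [dif_pos hv]
    · simp [bmap, hw]
  · intro h x hx
    have h1 := congrFun h x.1
    simp only [bmap, if_pos hx] at h1 ⊢
    rw [← h1]
    unfold bdOf
    rw [dif_pos x.2]

lemma group_sum (r : ℝ) (F : (Vtx → Bool) → ℝ) :
    (∑ σ : Conf c M, if spin c M σ [] = r then wt c J β M σ * F (bmap c M σ) else 0)
      = ∑ t ∈ Finset.image (bmap c M) Finset.univ,
          (∑ σ : Conf c M, if (∀ x : {v // v ∈ verts c M}, x.1 ∈ lev c M → σ x = t x.1)
              ∧ spin c M σ [] = r then wt c J β M σ else 0) * F t := by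
  rw [← Finset.sum_fiberwise_of_maps_to
    (fun σ _ => Finset.mem_image_of_mem (bmap c M) (Finset.mem_univ σ))
    (fun σ => if spin c M σ [] = r then wt c J β M σ * F (bmap c M σ) else 0)]
  apply Finset.sum_congr rfl
  intro t ht
  rw [Finset.sum_mul, Finset.sum_filter]
  apply Finset.sum_congr rfl
  intro σ _
  obtain ⟨τ, _, rfl⟩ := Finset.mem_image.1 ht
  by_cases hb : bmap c M σ = bmap c M τ
  · rw [if_pos hb, hb]
    by_cases hr : spin c M σ [] = r
    · rw [if_pos hr, if_pos ⟨(agree_iff c M).2 hb, hr⟩]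
    · rw [if_neg hr, if_neg (fun h => hr h.2), zero_mul]
  · rw [if_neg hb, if_neg (fun h => hb ((agree_iff c M).1 h.1)), zero_mul]

/-- unnormalized plus expectation -/
def Zp (g : ℝ → ℝ) : ℝ :=
  ∑ σ : Conf c M, if spin c M σ [] = 1 then wt c J β M σ * g (Xof c J β M σ) else 0

lemma Zp_bmap (g : ℝ → ℝ) :
    Zp c J β M g = ∑ t ∈ Finset.image (bmap c M) Finset.univ,
      Np c J β M t * g (condRatio c J β M t) := by
  have h1 : Zp c J β M g = ∑ σ : Conf c M, if spin c M σ [] = 1 then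
      wt c J β M σ * (fun t => g (condRatio c J β M t)) (bmap c M σ) else 0 := by
    unfold Zp
    apply Finset.sum_congr rfl
    intro σ _
    rw [Xof_eq_bmap]
  rw [h1]
  exact group_sum c J β M 1 (fun t => g (condRatio c J β M t))

lemma Zm_bmap (g : ℝ → ℝ) :
    (∑ σ : Conf c M, if spin c M σ [] = -1 then wt c J β M σ * g (Xof c J β M σ) else 0)
      = ∑ t ∈ Finset.image (bmap c M) Finset.univ,
        Nm c J β M t * g (condRatio c J β M t) := by
  have h1 : (∑ σ : Conf c M, if spin c M σ [] = -1 then wt c J β M σ * g (Xof c J β M σ) else 0)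
      = ∑ σ : Conf c M, if spin c M σ [] = (-1:ℝ) then
        wt c J β M σ * (fun t => g (condRatio c J β M t)) (bmap c M σ) else 0 := by
    apply Finset.sum_congr rfl
    intro σ _
    rw [Xof_eq_bmap]
  rw [h1]
  exact group_sum c J β M (-1) (fun t => g (condRatio c J β M t))

lemma SYM (hM : 0 < M) (g : ℝ → ℝ) :
    Zp c J β M (fun x => Real.exp (-x) * g (-x)) = Zp c J β M g := by
  have step1 : Zp c J β M (fun x => Real.exp (-x) * g (-x))
      = ∑ t ∈ Finset.image (bmap c M) Finset.univ,
          Nm c J β M t * g (-condRatio c J β M t) := by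
    rw [Zp_bmap]
    apply Finset.sum_congr rfl
    intro t _
    have hNp := Np_pos c J β M hM t
    have hNm := Nm_pos c J β M hM t
    show Np c J β M t * (Real.exp (-condRatio c J β M t) * g (-condRatio c J β M t))
        = Nm c J β M t * g (-condRatio c J β M t)
    have hexp : Real.exp (-condRatio c J β M t) = Nm c J β M t / Np c J β M t := by
      rw [condRatio_eq]
      rw [show -Real.log (Np c J β M t / Nm c J β M t)
          = Real.log (Nm c J β M t / Np c J β M t) by
        rw [Real.log_div hNp.ne' hNm.ne', Real.log_div hNm.ne' hNp.ne']; ring]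
      exact Real.exp_log (div_pos hNm hNp)
    rw [hexp]
    field_simp
  have step3 : (∑ t ∈ Finset.image (bmap c M) Finset.univ,
        Nm c J β M t * g (-condRatio c J β M t))
      = ∑ σ : Conf c M, if spin c M σ [] = -1 then
          wt c J β M σ * g (-(Xof c J β M σ)) else 0 := by
    rw [Zm_bmap c J β M (fun x => g (-x))]
  have step4 : (∑ σ : Conf c M, if spin c M σ [] = -1 then
        wt c J β M σ * g (-(Xof c J β M σ)) else 0) = Zp c J β M g := by
    unfold Zp
    apply Fintype.sum_bijective (negC c M) negC_bijective
    intro σ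
    rw [wt_negC, Xof_negC c J β M hM]
    have hsp := spin_negC c M σ (root_mem_verts c M)
    rcases spin_root_cases c M σ with h | h
    · rw [if_neg (by rw [h]; norm_num), if_neg (by rw [hsp, h]; norm_num)]
    · rw [if_pos h, if_pos (by rw [hsp, h]; norm_num)]
  rw [step1, step3, step4]

lemma Zp_congr {g g' : ℝ → ℝ} (h : ∀ x, g x = g' x) : Zp c J β M g = Zp c J β M g' := by
  rw [show g = g' from funext h]

lemma Zp_add (g1 g2 : ℝ → ℝ) :
    Zp c J β M (fun x => g1 x + g2 x) = Zp c J β M g1 + Zp c J β M g2 := by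
  unfold Zp
  rw [← Finset.sum_add_distrib]
  apply Finset.sum_congr rfl
  intro σ _
  split_ifs <;> ring

lemma Zp_smul (a : ℝ) (g : ℝ → ℝ) :
    Zp c J β M (fun x => a * g x) = a * Zp c J β M g := by
  unfold Zp
  rw [Finset.mul_sum]
  apply Finset.sum_congr rfl
  intro σ _
  split_ifs <;> ring

lemma Zp_nonneg (g : ℝ → ℝ) (hg : ∀ x, 0 ≤ g x) : 0 ≤ Zp c J β M g := by
  apply Finset.sum_nonneg
  intro σ _
  split_ifs
  · exact mul_nonneg (wt_pos c J β M σ).le (hg _)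
  · exact le_refl 0

lemma Zp_mono (g1 g2 : ℝ → ℝ) (h : ∀ x, g1 x ≤ g2 x) :
    Zp c J β M g1 ≤ Zp c J β M g2 := by
  apply Finset.sum_le_sum
  intro σ _
  split_ifs
  · exact mul_le_mul_of_nonneg_left (h _) (wt_pos c J β M σ).le
  · exact le_refl 0

lemma split_pos (hM : 0 < M) (g : ℝ → ℝ) (hg0 : g 0 = 0) (hodd : ∀ x, g (-x) = - g x) :
    Zp c J β M g = Zp c J β M (fun x => if 0 < x then g x * (1 - Real.exp (-x)) else 0) := by
  have h1 : Zp c J β M g = Zp c J β M (fun x => (if 0 < x then g x else 0)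
      + (if x < 0 then g x else 0)) := by
    apply Zp_congr
    intro x
    rcases lt_trichotomy x 0 with h | h | h
    · rw [if_neg (by linarith), if_pos h, zero_add]
    · rw [if_neg (by rw [h]; exact lt_irrefl 0), if_neg (by rw [h]; exact lt_irrefl 0), h, hg0,
        zero_add]
    · rw [if_pos h, if_neg (by linarith), add_zero]
  have h2 : Zp c J β M (fun x => if x < 0 then g x else 0)
      = Zp c J β M (fun x => if 0 < x then -(Real.exp (-x) * g x) else 0) := by
    rw [← SYM c J β M hM (fun x => if x < 0 then g x else 0)]
    apply Zp_congr
    intro x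
    by_cases h : 0 < x
    · rw [if_pos h, if_pos (by linarith), hodd]
      ring
    · rw [if_neg h, if_neg (by intro h'; exact h (by linarith)), mul_zero]
  rw [h1, Zp_add, h2, ← Zp_add]
  apply Zp_congr
  intro x
  by_cases h : 0 < x
  · rw [if_pos h, if_pos h, if_pos h]
    ring
  · rw [if_neg h, if_neg h, if_neg h, add_zero]

lemma W_pos : 0 < ∑ σ : Conf c M, if spin c M σ [] = 1 then wt c J β M σ else 0 := by
  apply Finset.sum_pos'
  · intro σ _
    split_ifs
    · exact (wt_pos c J β M σ).le
    · exact le_refl 0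
  · refine ⟨fun _ => true, Finset.mem_univ _, ?_⟩
    rw [if_pos]
    · exact wt_pos c J β M _
    · unfold spin
      rw [dif_pos (root_mem_verts c M)]
      simp

lemma Zp_one : Zp c J β M (fun _ => 1)
    = ∑ σ : Conf c M, if spin c M σ [] = 1 then wt c J β M σ else 0 := by
  unfold Zp
  apply Finset.sum_congr rfl
  intro σ _
  split_ifs
  · rw [mul_one]
  · rfl

lemma constraint (hM : 0 < M) :
    Zp c J β M (fun x => if 0 < x then 1 + Real.exp (-x) else 0)
      ≤ Zp c J β M (fun _ => 1) := by
  have h1 : Zp c J β M (fun _ => 1) = Zp c J β M (fun x => (if 0 < x then 1 + Real.exp (-x) else 0)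
      + ((if x < 0 then 1 else 0) - (if 0 < x then Real.exp (-x) else 0)
        + (if x = 0 then 1 else 0))) := by
    apply Zp_congr
    intro x
    rcases lt_trichotomy x 0 with h | h | h
    · rw [if_neg (by linarith), if_pos h, if_neg (by linarith), if_neg (by linarith)]
      norm_num
    · rw [if_neg (by rw [h]; exact lt_irrefl 0), if_neg (by rw [h]; exact lt_irrefl 0),
        if_neg (by rw [h]; exact lt_irrefl 0), if_pos h]
      norm_num
    · rw [if_pos h, if_neg (by linarith), if_pos h, if_neg (by linarith)]
      ring
  have h2 : Zp c J β M (fun x => if x < 0 then 1 else 0)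
      = Zp c J β M (fun x => if 0 < x then Real.exp (-x) else 0) := by
    rw [← SYM c J β M hM (fun x => if x < 0 then (1:ℝ) else 0)]
    apply Zp_congr
    intro x
    by_cases h : 0 < x
    · rw [if_pos h, if_pos (by linarith), mul_one]
    · rw [if_neg h, if_neg (by intro h'; exact h (by linarith)), mul_zero]
  have h3 : Zp c J β M (fun x => ((if x < 0 then 1 else 0) - (if 0 < x then Real.exp (-x) else 0)
        + (if x = 0 then 1 else 0))) = Zp c J β M (fun x => (if x < 0 then 1 else 0))
      - Zp c J β M (fun x => (if 0 < x then Real.exp (-x) else 0))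
      + Zp c J β M (fun x => (if x = 0 then 1 else 0)) := by
    have e1 := Zp_add c J β M
      (fun x => (if x < 0 then (1:ℝ) else 0) - (if 0 < x then Real.exp (-x) else 0))
      (fun x => (if x = 0 then (1:ℝ) else 0))
    have e2 : Zp c J β M (fun x => (if x < 0 then (1:ℝ) else 0) - (if 0 < x then Real.exp (-x) else 0))
        = Zp c J β M (fun x => (if x < 0 then (1:ℝ) else 0))
          - Zp c J β M (fun x => (if 0 < x then Real.exp (-x) else 0)) := by
      have e3 := Zp_add c J β M (fun x => (if x < 0 then (1:ℝ) else 0))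
        (fun x => -(if 0 < x then Real.exp (-x) else 0))
      have e4 := Zp_smul c J β M (-1) (fun x => (if 0 < x then Real.exp (-x) else 0))
      have e5 : Zp c J β M (fun x => -(if 0 < x then Real.exp (-x) else 0))
          = - Zp c J β M (fun x => (if 0 < x then Real.exp (-x) else 0)) := by
        calc Zp c J β M (fun x => -(if 0 < x then Real.exp (-x) else 0))
            = Zp c J β M (fun x => -1 * (if 0 < x then Real.exp (-x) else 0)) := by
              apply Zp_congr; intro x; ring
          _ = -1 * Zp c J β M (fun x => (if 0 < x then Real.exp (-x) else 0)) := e4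
          _ = - Zp c J β M (fun x => (if 0 < x then Real.exp (-x) else 0)) := by ring
      calc Zp c J β M (fun x => (if x < 0 then (1:ℝ) else 0) - (if 0 < x then Real.exp (-x) else 0))
          = Zp c J β M (fun x => (if x < 0 then (1:ℝ) else 0) + -(if 0 < x then Real.exp (-x) else 0)) := by
            apply Zp_congr; intro x; ring
        _ = _ := by rw [e3, e5]; ring
    rw [e1, e2]
  have h4 : 0 ≤ Zp c J β M (fun x => (if x = 0 then (1:ℝ) else 0)) := by
    apply Zp_nonneg
    intro x
    split_ifs <;> norm_num
  rw [h1, Zp_add, h3, ← h2]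
  linarith

lemma meanPlus_eq (g : ℝ → ℝ) : meanPlus c J β M g
    = Zp c J β M g / (∑ σ : Conf c M, if spin c M σ [] = 1 then wt c J β M σ else 0) := rfl

lemma mainBound (hM : 0 < M) {θ : ℝ} (hθ : θ ∈ Set.Ioo (0:ℝ) 1) :
    meanPlus c J β M (fun t => fbias θ t)
      ≤ θ * meanPlus c J β M (fun t => t)
        / (1 + PfAux.kap θ * meanPlus c J β M (fun t => t)) := by
  have hW := W_pos c J β M
  set W : ℝ := ∑ σ : Conf c M, if spin c M σ [] = 1 then wt c J β M σ else 0 with hWdef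
  have hsplit_id := split_pos c J β M hM (fun t => t) rfl (fun x => rfl)
  have hmhat : 0 ≤ Zp c J β M (fun t => t) := by
    rw [hsplit_id]
    apply Zp_nonneg
    intro x
    split_ifs with h
    · have : Real.exp (-x) ≤ 1 := Real.exp_le_one_iff.2 (by linarith)
      nlinarith
    · exact le_refl 0
  have hm : 0 ≤ meanPlus c J β M (fun t => t) := by
    rw [meanPlus_eq, ← hWdef]
    exact div_nonneg hmhat hW.le
  obtain ⟨lam, nu, hnu, hpt, hsum⟩ := PfAux.BLem hθ hm
  have hsplit_fb := split_pos c J β M hM (fbias θ) PfAux.fb_zero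
    (fun x => PfAux.fb_odd hθ x)
  have key : Zp c J β M (fbias θ) ≤ lam * Zp c J β M (fun t => t) + nu * W := by
    have k1 : Zp c J β M (fbias θ)
        ≤ Zp c J β M (fun x => lam * (if 0 < x then x * (1 - Real.exp (-x)) else 0)
            + nu * (if 0 < x then 1 + Real.exp (-x) else 0)) := by
      rw [hsplit_fb]
      apply Zp_mono
      intro x
      by_cases h : 0 < x
      · rw [if_pos h, if_pos h, if_pos h]
        exact hpt x h
      · rw [if_neg h, if_neg h, if_neg h]
        norm_num
    have k2 : Zp c J β M (fun x => lam * (if 0 < x then x * (1 - Real.exp (-x)) else 0)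
          + nu * (if 0 < x then 1 + Real.exp (-x) else 0))
        = lam * Zp c J β M (fun x => if 0 < x then x * (1 - Real.exp (-x)) else 0)
          + nu * Zp c J β M (fun x => if 0 < x then 1 + Real.exp (-x) else 0) := by
      rw [Zp_add, Zp_smul, Zp_smul]
    have k3 : nu * Zp c J β M (fun x => if 0 < x then 1 + Real.exp (-x) else 0) ≤ nu * W := by
      apply mul_le_mul_of_nonneg_left _ hnu
      rw [hWdef, ← Zp_one c J β M]
      exact constraint c J β M hM
    calc Zp c J β M (fbias θ) ≤ _ := k1
      _ = lam * Zp c J β M (fun x => if 0 < x then x * (1 - Real.exp (-x)) else 0)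
          + nu * Zp c J β M (fun x => if 0 < x then 1 + Real.exp (-x) else 0) := k2
      _ = lam * Zp c J β M (fun t => t)
          + nu * Zp c J β M (fun x => if 0 < x then 1 + Real.exp (-x) else 0) := by
          rw [← hsplit_id]
      _ ≤ lam * Zp c J β M (fun t => t) + nu * W := by linarith
  rw [meanPlus_eq c J β M (fun t => fbias θ t), meanPlus_eq c J β M (fun t => t), ← hWdef]
  have hdiv : Zp c J β M (fun t => fbias θ t) / W
      ≤ (lam * Zp c J β M (fun t => t) + nu * W) / W := by
    apply div_le_div_of_nonneg_right ?_ hW.le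
    exact key
  have heq : (lam * Zp c J β M (fun t => t) + nu * W) / W
      = lam * (Zp c J β M (fun t => t) / W) + nu := by
    field_simp
  have hsum' := hsum
  rw [meanPlus_eq c J β M (fun t => t), ← hWdef] at hsum'
  calc Zp c J β M (fun t => fbias θ t) / W
      ≤ (lam * Zp c J β M (fun t => t) + nu * W) / W := hdiv
    _ = lam * (Zp c J β M (fun t => t) / W) + nu := heq
    _ ≤ θ * (Zp c J β M (fun t => t) / W)
        / (1 + PfAux.kap θ * (Zp c J β M (fun t => t) / W)) := hsum'

end PfC

theorem stmt15 :
    ∃ κ : ℝ → ℝ, ContinuousOn κ (Set.Ioo 0 1) ∧ (∀ θ ∈ Set.Ioo (0 : ℝ) 1, 0 < κ θ) ∧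
      ∀ (c : Vtx → ℕ) (J : Vtx → ℝ) (β : ℝ), 0 < β →
        (∀ w, IsVtx c w → w ≠ [] → 0 < J w) →
        ∀ (N : ℕ) (v : Vtx), IsVtx c v → v ≠ [] → v.length < N →
          meanPlus (subC c v) (subJ J v) β (N - v.length)
              (fun t => fbias (Real.tanh (β * J v)) t) ≤
            Real.tanh (β * J v) *
                meanPlus (subC c v) (subJ J v) β (N - v.length) (fun t => t) /
              (1 + κ (Real.tanh (β * J v)) *
                meanPlus (subC c v) (subJ J v) β (N - v.length) (fun t => t)) := by
  refine ⟨PfAux.kap, PfAux.kap_continuousOn, fun θ hθ => PfAux.kap_pos θ hθ, ?_⟩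
  intro c J β hβ hJ N v hv hvne hlen
  have hJv : 0 < J v := hJ v hv hvne
  have harg : 0 < β * J v := mul_pos hβ hJv
  have ht : Real.tanh (β * J v) ∈ Set.Ioo (0:ℝ) 1 := by
    constructor
    · rw [Real.tanh_eq_sinh_div_cosh]
      exact div_pos (by rwa [Real.sinh_pos_iff]) (Real.cosh_pos _)
    · rw [Real.tanh_eq_sinh_div_cosh, div_lt_one (Real.cosh_pos _)]
      exact Real.sinh_lt_cosh _
  have hM : 0 < N - v.length := Nat.sub_pos_of_lt hlen
  exact PfC.mainBound (subC c v) (subJ J v) β (N - v.length) hM ht
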